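/- Let k and n be positive integers and r a nonnegative integer. Then, as an identity of polynomials in ℤ[x_1,…,x_n]: Σ_{y ∈ ℤ^k, y_1+⋯+y_k = 0} det_{1≤i,j≤k}( e_{r−i+j−k·y_i}(x_1,…,x_n) ) = e_r(x_1^k, x_2^k, …, x_n^k); only finitely many y ∈ ℤ^k with y_1+⋯+y_k = 0 give a nonzero determinant (since e_m = 0 unless 0 ≤ m ≤ n), so the sum is finite. -/

import Mathlib

open Finset

noncomputable def esymI {F : Type*} [CommRing F] (s : Multiset F) (r : ℤ) : F :=
  if r < 0 then 0 else ((Multiset.powersetCard r.toNat s).map Multiset.prod).sum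

noncomputable def eSym {F : Type*} [CommRing F] {n : ℕ} (x : Fin n → F) (r : ℤ) : F :=
  esymI (Finset.univ.val.map x) r

noncomputable def eDot {F : Type*} [Field F] {n : ℕ} (x : Fin n → F) (r : ℤ) : F :=
  esymI (Finset.univ.val.map x + Finset.univ.val.map fun i => (x i)⁻¹) r

noncomputable def eDDot {F : Type*} [Field F] {n : ℕ} (x : Fin n → F) (r : ℤ) : F :=
  esymI (Finset.univ.val.map x + Finset.univ.val.map (fun i => (x i)⁻¹) + {1}) r

def multPart (n : ℕ) (lam : ℕ → ℕ) (i : ℕ) : ℕ :=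
  ((Finset.range n).filter fun j => lam j = i).card

noncomputable def vHL {F : Type*} [Field F] (n : ℕ) (t : F) (lam : ℕ → ℕ) : F :=
  ∏ i ∈ (Finset.range n).image lam,
    ∏ j ∈ Finset.range (multPart n lam i), (1 - t ^ (j + 1)) / (1 - t)

open scoped Classical in
noncomputable def HLP {F : Type*} [Field F] (n : ℕ) (x : Fin n → F) (t : F) (lam : ℕ → ℕ) : F :=
  if ∀ i, n ≤ i → lam i = 0 then
    (vHL n t lam)⁻¹ *
      ∑ w : Equiv.Perm (Fin n),
        (∏ i : Fin n, x (w i) ^ lam i.val) *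
          ∏ p ∈ Finset.univ.filter fun p : Fin n × Fin n => p.1 < p.2,
            (x (w p.1) - t * x (w p.2)) / (x (w p.1) - x (w p.2))
  else 0

def pad {n B : ℕ} (f : Fin n → Fin B) : ℕ → ℕ :=
  fun i => if h : i < n then (f ⟨i, h⟩ : ℕ) else 0

def zchoose2 (y : ℤ) : ℤ := y * (y - 1) / 2

abbrev FQ (σ : Type*) : Type _ := FractionRing (MvPolynomial σ ℚ)

noncomputable def XX {σ : Type*} (s : σ) : FQ σ :=
  algebraMap (MvPolynomial σ ℚ) (FractionRing (MvPolynomial σ ℚ)) (MvPolynomial.X s)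

noncomputable def qPoch (a p : ℂ) : ℂ := ∏' j : ℕ, (1 - a * p ^ j)

noncomputable def theta (a p : ℂ) : ℂ := qPoch a p * qPoch (p / a) p

def gbinom {F : Type*} [CommRing F] (t : F) : ℕ → ℕ → F
  | _, 0 => 1
  | 0, _ + 1 => 0
  | m + 1, r + 1 => gbinom t m (r + 1) + t ^ (m - r) * gbinom t m r

noncomputable def gbinomZ {F : Type*} [CommRing F] (t : F) (m : ℕ) (r : ℤ) : F :=
  if r < 0 then 0 else gbinom t m r.toNat

def lodd {n B : ℕ} (f : Fin n → Fin B) : ℕ :=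
  (Finset.univ.filter fun i : Fin n => Odd (f i : ℕ)).card

section AuxJT

variable {R : Type*} [CommRing R]

lemma esymI_of_neg {s : Multiset R} {r : ℤ} (h : r < 0) : esymI s r = 0 := if_pos h

lemma esymI_zero (s : Multiset R) : esymI s 0 = 1 := by
  simp [esymI]

lemma esymI_of_card_lt {s : Multiset R} {r : ℤ} (h : (Multiset.card s : ℤ) < r) :
    esymI s r = 0 := by
  have h0 : ¬ r < 0 := by omega
  have hc : Multiset.card s < r.toNat := by omega
  simp [esymI, h0, Multiset.powersetCard_eq_empty _ hc]

lemma esymI_bounds {s : Multiset R} {r : ℤ} (h : esymI s r ≠ 0) :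
    0 ≤ r ∧ r ≤ (Multiset.card s : ℤ) := by
  constructor
  · by_contra hc; exact h (esymI_of_neg (by omega))
  · by_contra hc; exact h (esymI_of_card_lt (by omega))

lemma esymI_cons (a : R) (s : Multiset R) (r : ℤ) :
    esymI (a ::ₘ s) r = esymI s r + a * esymI s (r - 1) := by
  rcases lt_trichotomy r 0 with hr | hr | hr
  · rw [esymI_of_neg hr, esymI_of_neg hr, esymI_of_neg (by omega), mul_zero, add_zero]
  · subst hr
    rw [esymI_zero, esymI_zero, esymI_of_neg (by norm_num), mul_zero, add_zero]
  · have h0 : ¬ r < 0 := by omega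
    have h1 : ¬ r - 1 < 0 := by omega
    have ht : r.toNat = (r-1).toNat + 1 := by omega
    rw [esymI, esymI, esymI, if_neg h0, if_neg h0, if_neg h1, ht,
      Multiset.powersetCard_cons, Multiset.map_add, Multiset.sum_add, Multiset.map_map]
    have : (Multiset.prod ∘ Multiset.cons a) = fun t : Multiset R => a * t.prod := by
      funext t; simp [Multiset.prod_cons]
    rw [this, Multiset.sum_map_mul_left]

noncomputable def Dm (k : ℕ) (s : Multiset R) (v : Fin k → ℤ) : R :=
  Matrix.det (Matrix.of fun i j : Fin k => esymI s (v i + j))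

lemma Dm_eq_zero_of_eq {k : ℕ} (s : Multiset R) (v : Fin k → ℤ) {i i' : Fin k}
    (hne : i ≠ i') (hv : v i = v i') : Dm k s v = 0 := by
  apply Matrix.det_zero_of_row_eq hne
  funext j
  simp [Matrix.of_apply, hv]

lemma Dm_swap {k : ℕ} (s : Multiset R) (v : Fin k → ℤ) {i i' : Fin k} (hne : i ≠ i') :
    Dm k s (v ∘ (Equiv.swap i i')) = - Dm k s v := by
  have := Matrix.det_permute (Equiv.swap i i')
    (Matrix.of fun i j : Fin k => esymI s (v i + j))
  rw [Equiv.Perm.sign_swap hne] at this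
  have h2 : Dm k s (v ∘ (Equiv.swap i i')) =
      ((Matrix.of fun i j : Fin k => esymI s (v i + j)).submatrix (Equiv.swap i i') id).det := by
    unfold Dm; congr 1
  rw [h2, this, Dm]; simp

lemma Dm_row_ne {k : ℕ} (s : Multiset R) (v : Fin k → ℤ) (h : Dm k s v ≠ 0) (i : Fin k) :
    ∃ j : Fin k, esymI s (v i + j) ≠ 0 := by
  by_contra hall
  push_neg at hall
  exact h (Matrix.det_eq_zero_of_row_eq_zero i fun j => hall j)

lemma y_bounds {k : ℕ} (hk : 0 < k) (s : Multiset R) (r : ℤ) (c y : Fin k → ℤ)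
    (hc : ∀ i, 0 ≤ c i ∧ c i ≤ 1)
    (hne : Dm k s (fun i => r - i - c i - k * y i) ≠ 0) (i : Fin k) :
    -(|r| + k + Multiset.card s + 1) ≤ y i ∧ y i ≤ |r| + k := by
  obtain ⟨j, hj⟩ := Dm_row_ne s _ hne i
  obtain ⟨h0, h1⟩ := esymI_bounds hj
  have hk1 : (1:ℤ) ≤ k := by exact_mod_cast hk
  have hi' : ((i : ℕ) : ℤ) ≤ (k : ℤ) - 1 := by
    have h := i.isLt
    have : ((i : ℕ) : ℤ) < (k : ℤ) := by exact_mod_cast h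
    linarith
  have hj' : ((j : ℕ) : ℤ) ≤ (k : ℤ) - 1 := by
    have h := j.isLt
    have : ((j : ℕ) : ℤ) < (k : ℤ) := by exact_mod_cast h
    linarith
  have hi0 : (0:ℤ) ≤ ((i : ℕ) : ℤ) := Int.natCast_nonneg _
  have hj0 : (0:ℤ) ≤ ((j : ℕ) : ℤ) := Int.natCast_nonneg _
  have hc0 := (hc i).1
  have hc1 := (hc i).2
  have habs1 := le_abs_self r
  have habs2 := neg_abs_le r
  have habs0 := abs_nonneg r
  have hup : (k:ℤ) * y i ≤ |r| + k - 1 := by linarith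
  have hlo : -(|r| + (k:ℤ) + Multiset.card s + 1) ≤ (k:ℤ) * y i := by
    have : (0:ℤ) ≤ (Multiset.card s : ℤ) := Int.natCast_nonneg _
    linarith
  constructor
  · rcases le_or_gt 0 (y i) with hy | hy
    · linarith
    · have h2 : (k:ℤ) * y i ≤ 1 * y i := mul_le_mul_of_nonpos_right hk1 (le_of_lt hy)
      linarith
  · rcases le_or_gt (y i) 0 with hy | hy
    · linarith
    · have h2 : 1 * y i ≤ (k:ℤ) * y i := mul_le_mul_of_nonneg_right hk1 (le_of_lt hy)
      linarith

lemma finsum_T_eq_sum {k : ℕ} (h : (Fin k → ℤ) → R) (B : Finset (Fin k → ℤ))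
    (hsupp : ∀ y : Fin k → ℤ, (∑ i, y i = 0) → h y ≠ 0 → y ∈ B) :
    ∑ᶠ y ∈ {y : Fin k → ℤ | ∑ i, y i = 0}, h y
      = ∑ y ∈ B.filter (fun y => ∑ i, y i = 0), h y := by
  apply finsum_mem_eq_sum_of_inter_support_eq
  ext y
  simp only [Set.mem_inter_iff, Set.mem_setOf_eq, Function.mem_support, Finset.coe_filter,
    ne_eq]
  constructor
  · rintro ⟨h1, h2⟩; exact ⟨⟨hsupp y h1 h2, h1⟩, h2⟩
  · rintro ⟨⟨_, h1⟩, h2⟩; exact ⟨h1, h2⟩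

lemma vanish {k : ℕ} (h : (Fin k → ℤ) → R) (τ : (Fin k → ℤ) → Fin k → ℤ)
    (hτsum : ∀ y : Fin k → ℤ, (∑ i, y i = 0) → ∑ i, τ y i = 0)
    (hττ : ∀ y, τ (τ y) = y)
    (hanti : ∀ y, h y + h (τ y) = 0)
    (hfix : ∀ y, τ y = y → h y = 0)
    (B : Finset (Fin k → ℤ))
    (hsupp : ∀ y : Fin k → ℤ, (∑ i, y i = 0) → h y ≠ 0 → y ∈ B)
    (hBτ : ∀ y ∈ B, τ y ∈ B) :
    ∑ᶠ y ∈ {y : Fin k → ℤ | ∑ i, y i = 0}, h y = 0 := by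
  rw [finsum_T_eq_sum h B hsupp]
  apply Finset.sum_involution (fun y _ => τ y)
  · intro y _; exact hanti y
  · intro y _ hy he; exact hy (hfix y he)
  · intro y hy
    simp only [Finset.mem_filter] at hy ⊢
    exact ⟨hBτ y hy.1, hτsum y hy.2⟩
  · intro y _; exact hττ y

lemma Dm_apply {k : ℕ} (s : Multiset R) (v : Fin k → ℤ) :
    Dm k s v = ∑ σ : Equiv.Perm (Fin k),
      ((Equiv.Perm.sign σ : ℤ) : R) * ∏ i, esymI s (v i + σ i) := by
  rw [Dm, ← Matrix.det_transpose, Matrix.det_apply']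
  apply Finset.sum_congr rfl
  intro σ _
  simp [Matrix.transpose_apply]

lemma Dm_cons {k : ℕ} (a : R) (s : Multiset R) (v : Fin k → ℤ) :
    Dm k (a ::ₘ s) v = ∑ S ∈ (Finset.univ : Finset (Fin k)).powerset,
      a ^ S.card * Dm k s (fun i => v i - if i ∈ S then 1 else 0) := by
  rw [Dm_apply]
  have step1 : ∀ σ : Equiv.Perm (Fin k),
      ∏ i, esymI (a ::ₘ s) (v i + σ i)
        = ∑ S ∈ (Finset.univ : Finset (Fin k)).powerset,
            a ^ S.card * ∏ i, esymI s (v i - (if i ∈ S then 1 else 0) + σ i) := by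
    intro σ
    have h1 : ∀ i : Fin k, esymI (a ::ₘ s) (v i + σ i)
        = a * esymI s (v i - 1 + σ i) + esymI s (v i + σ i) := by
      intro i
      rw [esymI_cons, show v i + ((σ i : ℕ) : ℤ) - 1 = v i - 1 + σ i by ring, add_comm]
    rw [Finset.prod_congr rfl fun i _ => h1 i, Finset.prod_add]
    apply Finset.sum_congr rfl
    intro S _
    have hprod : ∏ i, esymI s (v i - (if i ∈ S then 1 else 0) + σ i)
        = (∏ i ∈ Finset.univ \ S, esymI s (v i + σ i)) *
            ∏ i ∈ S, esymI s (v i - 1 + σ i) := by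
      rw [← Finset.prod_sdiff (Finset.subset_univ S)]
      congr 1
      · apply Finset.prod_congr rfl
        intro i hi
        have : i ∉ S := (Finset.mem_sdiff.mp hi).2
        simp [this]
      · apply Finset.prod_congr rfl
        intro i hi
        simp [hi]
    rw [hprod, Finset.prod_mul_distrib, Finset.prod_const]
    ring
  calc ∑ σ : Equiv.Perm (Fin k), ((Equiv.Perm.sign σ : ℤ) : R) *
        ∏ i, esymI (a ::ₘ s) (v i + σ i)
      = ∑ σ : Equiv.Perm (Fin k), ∑ S ∈ (Finset.univ : Finset (Fin k)).powerset,
          a ^ S.card * (((Equiv.Perm.sign σ : ℤ) : R) *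
            ∏ i, esymI s (v i - (if i ∈ S then 1 else 0) + σ i)) := by
        apply Finset.sum_congr rfl
        intro σ _
        rw [step1 σ, Finset.mul_sum]
        apply Finset.sum_congr rfl
        intro S _
        ring
    _ = ∑ S ∈ (Finset.univ : Finset (Fin k)).powerset, ∑ σ : Equiv.Perm (Fin k),
          a ^ S.card * (((Equiv.Perm.sign σ : ℤ) : R) *
            ∏ i, esymI s (v i - (if i ∈ S then 1 else 0) + σ i)) := Finset.sum_comm
    _ = ∑ S ∈ (Finset.univ : Finset (Fin k)).powerset,
          a ^ S.card * Dm k s (fun i => v i - if i ∈ S then 1 else 0) := by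
        apply Finset.sum_congr rfl
        intro S _
        rw [Dm_apply, Finset.mul_sum]

lemma esymI_nil (r : ℤ) : esymI (0 : Multiset R) r = if r = 0 then 1 else 0 := by
  rcases lt_trichotomy r 0 with hr | hr | hr
  · rw [esymI_of_neg hr, if_neg (by omega)]
  · subst hr; rw [esymI_zero, if_pos rfl]
  · rw [esymI_of_card_lt (by simp; omega), if_neg (by omega)]

lemma base_zero_term {k : ℕ} (hk : 0 < k) (r : ℤ) (y : Fin k → ℤ)
    (hy : ∑ i, y i = 0) (hne : ¬(r = 0 ∧ y = 0)) :
    Dm k (0 : Multiset R) (fun i => r - i - k * y i) = 0 := by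
  rw [Dm_apply]
  apply Finset.sum_eq_zero
  intro σ _
  suffices h : (∏ i, esymI (0 : Multiset R) (r - i - k * y i + σ i)) = 0 by
    rw [h, mul_zero]
  by_contra hP
  have hall : ∀ i : Fin k, r - i - k * y i + σ i = 0 := by
    intro i
    by_contra hi
    exact hP (Finset.prod_eq_zero (Finset.mem_univ i)
      (by rw [esymI_nil, if_neg hi]))
  have hsum : ∑ i : Fin k, (r - i - k * y i + σ i) = 0 :=
    Finset.sum_eq_zero fun i _ => hall i
  have hσ : ∑ i : Fin k, ((σ i : ℕ) : ℤ) = ∑ i : Fin k, ((i : ℕ) : ℤ) :=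
    Equiv.sum_comp σ (fun i : Fin k => ((i : ℕ) : ℤ))
  have hkr : (k : ℤ) * r = 0 := by
    have : ∑ i : Fin k, (r - i - k * y i + σ i)
        = (k : ℤ) * r - (k : ℤ) * ∑ i, y i
          + (∑ i : Fin k, ((σ i : ℕ) : ℤ) - ∑ i : Fin k, ((i : ℕ) : ℤ)) := by
      rw [Finset.sum_add_distrib, Finset.sum_sub_distrib, Finset.sum_sub_distrib,
        Finset.sum_const, Finset.mul_sum]
      simp [Finset.card_univ]
      ring
    rw [this, hσ, hy] at hsum
    linarith
  have hr0 : r = 0 := by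
    have hk' : (k : ℤ) ≠ 0 := by exact_mod_cast hk.ne'
    exact (mul_eq_zero.mp hkr).resolve_left hk'
  have hy0 : y = 0 := by
    funext i
    have h1 := hall i
    rw [hr0] at h1
    have hik : ((i : ℕ) : ℤ) < k := by exact_mod_cast i.isLt
    have hσk : ((σ i : ℕ) : ℤ) < k := by exact_mod_cast (σ i).isLt
    have hi0 : (0:ℤ) ≤ ((i : ℕ) : ℤ) := Int.natCast_nonneg _
    have hσ0 : (0:ℤ) ≤ ((σ i : ℕ) : ℤ) := Int.natCast_nonneg _
    have hky : (k:ℤ) * y i = (σ i : ℕ) - (i : ℕ) := by linarith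
    have hk1 : (1:ℤ) ≤ k := by exact_mod_cast hk
    simp only [Pi.zero_apply]
    rcases lt_trichotomy (y i) 0 with hyi | hyi | hyi
    · have : (k:ℤ) * y i ≤ (k:ℤ) * (-1) :=
        mul_le_mul_of_nonneg_left (by omega) (by linarith)
      linarith
    · exact hyi
    · have : (k:ℤ) * 1 ≤ (k:ℤ) * y i :=
        mul_le_mul_of_nonneg_left (by omega) (by linarith)
      linarith
  exact hne ⟨hr0, hy0⟩

lemma base_case {k : ℕ} (hk : 0 < k) (r : ℤ) :
    ∑ᶠ y ∈ {y : Fin k → ℤ | ∑ i, y i = 0},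
      Dm k (0 : Multiset R) (fun i => r - i - k * y i) = esymI (0 : Multiset R) r := by
  rw [esymI_nil]
  by_cases hr : r = 0
  · subst hr
    rw [if_pos rfl]
    rw [finsum_T_eq_sum _ ({(0 : Fin k → ℤ)} : Finset (Fin k → ℤ))
      (fun y hy hne => by
        simp only [Finset.mem_singleton]
        by_contra hy0
        exact hne (base_zero_term hk 0 y hy (fun h => hy0 h.2)))]
    rw [Finset.filter_true_of_mem (fun y hy => by
      simp only [Finset.mem_singleton] at hy; subst hy; simp)]
    rw [Finset.sum_singleton]
    have hmat : (Matrix.of fun i j : Fin k =>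
        esymI (0 : Multiset R) ((fun i : Fin k => (0:ℤ) - i - k * (0:Fin k → ℤ) i) i + j))
        = (1 : Matrix (Fin k) (Fin k) R) := by
      ext i j
      simp only [Matrix.of_apply, Pi.zero_apply, mul_zero, sub_zero, zero_sub, Matrix.one_apply]
      rw [esymI_nil]
      congr 1
      simp only [eq_iff_iff]
      constructor
      · intro h
        have : ((i:ℕ):ℤ) = ((j:ℕ):ℤ) := by linarith
        have : (i:ℕ) = (j:ℕ) := by exact_mod_cast this
        exact Fin.ext this
      · intro h; subst h; ring
    rw [Dm, hmat, Matrix.det_one]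
  · rw [if_neg hr]
    rw [finsum_T_eq_sum _ (∅ : Finset (Fin k → ℤ))
      (fun y hy hne => absurd (base_zero_term hk r y hy (fun h => hr h.1)) hne)]
    simp

lemma boundary {k : ℕ} (hk : 0 < k) (S : Finset (Fin k)) (hS0 : S ≠ ∅) (hSu : S ≠ Finset.univ) :
    (∃ i : Fin k, ∃ h1 : (i : ℕ) + 1 < k, i ∈ S ∧ (⟨(i:ℕ)+1, h1⟩ : Fin k) ∉ S) ∨
    ((⟨k-1, by omega⟩ : Fin k) ∈ S ∧ (⟨0, hk⟩ : Fin k) ∉ S) := by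
  by_cases hA : ∃ i : Fin k, ∃ h1 : (i:ℕ)+1 < k, i ∈ S ∧ (⟨(i:ℕ)+1, h1⟩ : Fin k) ∉ S
  · exact Or.inl hA
  · push_neg at hA
    right
    have up : ∀ p : ℕ, ∀ hp : p < k, (⟨p, hp⟩ : Fin k) ∈ S →
        ∀ q : ℕ, p ≤ q → ∀ hq : q < k, (⟨q, hq⟩ : Fin k) ∈ S := by
      intro p hp hpS q hpq
      induction q, hpq using Nat.le_induction with
      | base => intro hq; exact hpS
      | succ m hm ihm =>
        intro hq
        have hmk : m < k := by omega
        have hmem := ihm hmk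
        exact hA ⟨m, hmk⟩ hq hmem
    obtain ⟨i, hi⟩ := Finset.nonempty_iff_ne_empty.mpr hS0
    constructor
    · exact up i i.isLt (by simpa using hi) (k-1) (by omega) (by omega)
    · intro h0
      apply hSu
      apply Finset.eq_univ_iff_forall.mpr
      intro j
      have := up 0 hk h0 j (Nat.zero_le _) j.isLt
      simpa using this

lemma vanishA {k : ℕ} (hk : 0 < k) (s : Multiset R) (r : ℤ) (a : R) (S : Finset (Fin k))
    (i0 : Fin k) (h1 : (i0:ℕ)+1 < k) (hi0 : i0 ∈ S) (hi1 : (⟨(i0:ℕ)+1, h1⟩ : Fin k) ∉ S) :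
    ∑ᶠ y ∈ {y : Fin k → ℤ | ∑ i, y i = 0},
      a ^ S.card * Dm k s (fun i => r - i - (if i ∈ S then 1 else 0) - k * y i) = 0 := by
  set i1 : Fin k := ⟨(i0:ℕ)+1, h1⟩ with hi1def
  have hne : i0 ≠ i1 := by
    intro h
    have := congrArg Fin.val h
    simp [hi1def] at this
  apply vanish _ (fun y => y ∘ Equiv.swap i0 i1)
  · intro y hy
    rw [← hy]
    exact Equiv.sum_comp (Equiv.swap i0 i1) y
  · intro y
    funext l
    simp [Function.comp, Equiv.swap_apply_self]
  · intro y
    have key : (fun i : Fin k => r - i - (if i ∈ S then 1 else 0) - k * (y ∘ Equiv.swap i0 i1) i)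
        = (fun i : Fin k => r - i - (if i ∈ S then 1 else 0) - k * y i) ∘ Equiv.swap i0 i1 := by
      funext l
      by_cases hl0 : l = i0
      · subst hl0
        simp only [Function.comp_apply, Equiv.swap_apply_left, hi0, hi1, if_pos, if_neg,
          if_true, if_false]
        push_cast [hi1def]
        ring
      · by_cases hl1 : l = i1
        · subst hl1
          simp only [Function.comp_apply, Equiv.swap_apply_right, hi0, hi1, if_pos, if_neg,
            if_true, if_false]
          push_cast [hi1def]
          ring
        · rw [Function.comp_apply, Equiv.swap_apply_of_ne_of_ne hl0 hl1]
          simp [Equiv.swap_apply_of_ne_of_ne hl0 hl1]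
    rw [key, Dm_swap s _ hne]
    ring
  · intro y hfix
    have hyy : y i1 = y i0 := by
      have := congrFun hfix i0
      simpa [Function.comp, Equiv.swap_apply_left] using this
    have : Dm k s (fun i : Fin k => r - i - (if i ∈ S then 1 else 0) - k * y i) = 0 := by
      apply Dm_eq_zero_of_eq s _ hne
      simp only [hi0, hi1, hyy, if_pos, if_neg, if_true, if_false]
      push_cast [hi1def]
      ring
    rw [this, mul_zero]
  · -- hsupp
    intro y hy hne0
    have hDm : Dm k s (fun i : Fin k => r - i - (if i ∈ S then 1 else 0) - k * y i) ≠ 0 :=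
      fun h => hne0 (by rw [h, mul_zero])
    rw [Fintype.mem_piFinset]
    intro l
    rw [Finset.mem_Icc]
    exact y_bounds hk s r _ y (fun i => by split <;> omega) hDm l
  · -- hBτ
    intro y hyB
    rw [Fintype.mem_piFinset] at hyB ⊢
    intro l
    exact hyB (Equiv.swap i0 i1 l)

lemma vanishB {k : ℕ} (hk : 0 < k) (s : Multiset R) (r : ℤ) (a : R) (S : Finset (Fin k))
    (hlast : (⟨k-1, by omega⟩ : Fin k) ∈ S) (h0 : (⟨0, hk⟩ : Fin k) ∉ S) :
    ∑ᶠ y ∈ {y : Fin k → ℤ | ∑ i, y i = 0},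
      a ^ S.card * Dm k s (fun i => r - i - (if i ∈ S then 1 else 0) - k * y i) = 0 := by
  set z : Fin k := ⟨0, hk⟩ with hzdef
  set w : Fin k := ⟨k-1, by omega⟩ with hwdef
  have hne : z ≠ w := fun h => h0 (h ▸ hlast)
  have hkw : ((w : ℕ) : ℤ) = (k : ℤ) - 1 := by
    rw [hwdef]; push_cast; omega
  have hkz : ((z : ℕ) : ℤ) = 0 := by simp [hzdef]
  set τ : (Fin k → ℤ) → (Fin k → ℤ) :=
    fun y l => if l = z then y w + 1 else if l = w then y z - 1 else y l with hτdef
  apply vanish _ τ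
  · intro y hy
    have hsplit : ∀ u : Fin k → ℤ, ∑ i, u i
        = ∑ i ∈ Finset.univ \ {z, w}, u i + ∑ i ∈ ({z, w} : Finset (Fin k)), u i := by
      intro u
      rw [Finset.sum_sdiff (Finset.subset_univ _)]
    rw [hsplit (τ y), hsplit y] at *
    have e1 : ∑ i ∈ Finset.univ \ {z, w}, τ y i = ∑ i ∈ Finset.univ \ {z, w}, y i := by
      apply Finset.sum_congr rfl
      intro l hl
      simp only [Finset.mem_sdiff, Finset.mem_insert, Finset.mem_singleton] at hl
      push_neg at hl
      simp [hτdef, hl.2.1, hl.2.2]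
    have e2 : ∑ i ∈ ({z, w} : Finset (Fin k)), τ y i
        = ∑ i ∈ ({z, w} : Finset (Fin k)), y i := by
      rw [Finset.sum_pair hne, Finset.sum_pair hne]
      have t1 : τ y z = y w + 1 := by simp [hτdef]
      have t2 : τ y w = y z - 1 := by simp [hτdef, hne.symm]
      rw [t1, t2]; ring
    rw [e1, e2]
    exact hy
  · intro y
    funext l
    by_cases hlz : l = z
    · subst hlz
      simp only [hτdef, if_pos rfl, if_neg hne.symm, if_neg hne]
      simp [if_neg hne.symm]
    · by_cases hlw : l = w
      · subst hlw
        simp only [hτdef, if_neg hne.symm, if_pos rfl]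
        simp [if_neg hne.symm]
      · simp [hτdef, hlz, hlw]
  · intro y
    have key : (fun i : Fin k => r - i - (if i ∈ S then 1 else 0) - k * (τ y) i)
        = (fun i : Fin k => r - i - (if i ∈ S then 1 else 0) - k * y i) ∘ Equiv.swap z w := by
      funext l
      by_cases hlz : l = z
      · subst hlz
        rw [Function.comp_apply, Equiv.swap_apply_left]
        simp only [hτdef, if_pos rfl, h0, hlast, if_neg, if_pos, if_false, if_true]
        rw [hkz, hkw]
        ring
      · by_cases hlw : l = w
        · subst hlw
          rw [Function.comp_apply, Equiv.swap_apply_right]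
          simp only [hτdef, if_neg hne.symm, if_pos rfl, h0, hlast, if_neg, if_pos,
            if_false, if_true]
          rw [hkz, hkw]
          ring
        · rw [Function.comp_apply, Equiv.swap_apply_of_ne_of_ne hlz hlw]
          simp [hτdef, hlz, hlw]
    rw [key, Dm_swap s _ hne]
    ring
  · intro y hfix
    have hyy : y z = y w + 1 := by
      have h' := congrFun hfix z
      simp only [hτdef, if_pos rfl] at h'
      exact h'.symm
    have : Dm k s (fun i : Fin k => r - i - (if i ∈ S then 1 else 0) - k * y i) = 0 := by
      apply Dm_eq_zero_of_eq s _ hne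
      simp only [h0, hlast, if_neg, if_pos, if_false, if_true]
      rw [hkz, hkw, hyy]
      ring
    rw [this, mul_zero]
  · -- hsupp
    intro y hy hne0
    have hDm : Dm k s (fun i : Fin k => r - i - (if i ∈ S then 1 else 0) - k * y i) ≠ 0 :=
      fun h => hne0 (by rw [h, mul_zero])
    have hb := y_bounds hk s r _ y (fun i => by split <;> omega) hDm
    rw [Fintype.mem_piFinset
      (t := fun l : Fin k => if l = z then
          Finset.Icc (-(|r| + (k:ℤ) + Multiset.card s + 1)) ((|r| + (k:ℤ)) + 1)
        else if l = w then
          Finset.Icc (-(|r| + (k:ℤ) + Multiset.card s + 1) - 1) (|r| + (k:ℤ))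
        else Finset.Icc (-(|r| + (k:ℤ) + Multiset.card s + 1)) (|r| + (k:ℤ)))]
    intro l
    obtain ⟨hb1, hb2⟩ := hb l
    split
    · rw [Finset.mem_Icc]; constructor <;> linarith
    · split
      · rw [Finset.mem_Icc]; constructor <;> linarith
      · rw [Finset.mem_Icc]; constructor <;> linarith
  · -- hBτ
    intro y hyB
    rw [Fintype.mem_piFinset] at hyB ⊢
    intro l
    have hz' := hyB z
    have hw' := hyB w
    have hl' := hyB l
    rw [if_pos rfl] at hz'
    rw [if_neg hne.symm, if_pos rfl] at hw'
    rw [Finset.mem_Icc] at hz' hw'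
    by_cases hlz : l = z
    · subst hlz
      rw [if_pos rfl, Finset.mem_Icc]
      have : τ y z = y w + 1 := by simp [hτdef]
      rw [this]
      constructor <;> linarith [hw'.1, hw'.2]
    · by_cases hlw : l = w
      · subst hlw
        rw [if_neg hne.symm, if_pos rfl, Finset.mem_Icc]
        have : τ y w = y z - 1 := by simp [hτdef, hne.symm]
        rw [this]
        constructor <;> linarith [hz'.1, hz'.2]
      · rw [if_neg hlz, if_neg hlw] at hl' ⊢
        simpa [hτdef, hlz, hlw] using hl'

theorem main_ind {k : ℕ} (hk : 0 < k) (s : Multiset R) (r : ℤ) :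
    ∑ᶠ y ∈ {y : Fin k → ℤ | ∑ i, y i = 0},
      Dm k s (fun i => r - i - k * y i) = esymI (s.map (fun x => x ^ k)) r := by
  induction s using Multiset.induction generalizing r with
  | empty => simpa using base_case hk r
  | cons a s ih =>
    have hcast : ((Multiset.card (a ::ₘ s) : ℕ) : ℤ) = (Multiset.card s : ℤ) + 1 := by
      rw [Multiset.card_cons]; push_cast; ring
    set B0 : Finset (Fin k → ℤ) := Fintype.piFinset (fun _ : Fin k =>
      Finset.Icc (-(|r| + (k:ℤ) + (Multiset.card s : ℤ) + 2)) (|r| + (k:ℤ) + 1)) with hB0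
    have hmemB0 : ∀ y : Fin k → ℤ,
        (∀ l, -(|r| + (k:ℤ) + (Multiset.card s : ℤ) + 2) ≤ y l ∧ y l ≤ |r| + (k:ℤ) + 1) →
        y ∈ B0 := by
      intro y h
      rw [hB0, Fintype.mem_piFinset]
      intro l
      rw [Finset.mem_Icc]
      exact h l
    have hsuppA : ∀ y : Fin k → ℤ, (∑ i, y i = 0) →
        Dm k (a ::ₘ s) (fun i => r - i - (k:ℤ) * y i) ≠ 0 → y ∈ B0 := by
      intro y hy hne
      have heq : (fun i : Fin k => r - i - (k:ℤ) * y i)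
          = fun i : Fin k => r - i - (fun _ : Fin k => (0:ℤ)) i - k * y i := by
        funext i; ring
      rw [heq] at hne
      have hb := y_bounds hk (a ::ₘ s) r _ y (fun i => by norm_num) hne
      apply hmemB0
      intro l
      obtain ⟨h1, h2⟩ := hb l
      rw [hcast] at h1
      constructor <;> linarith
    have hsuppS : ∀ S : Finset (Fin k), ∀ y : Fin k → ℤ, (∑ i, y i = 0) →
        a ^ S.card * Dm k s (fun i => r - i - (if i ∈ S then 1 else 0) - (k:ℤ) * y i) ≠ 0 →
        y ∈ B0 := by
      intro S y hy hne
      have hne' : Dm k s (fun i : Fin k => r - i - (if i ∈ S then 1 else 0) - (k:ℤ) * y i)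
          ≠ 0 := fun h => hne (by rw [h, mul_zero])
      have hb := y_bounds hk s r _ y (fun i => by split <;> omega) hne'
      apply hmemB0
      intro l
      obtain ⟨h1, h2⟩ := hb l
      constructor <;> linarith
    have hsupp0 : ∀ y : Fin k → ℤ, (∑ i, y i = 0) →
        Dm k s (fun i => r - i - (k:ℤ) * y i) ≠ 0 → y ∈ B0 := by
      intro y hy hne
      have heq : (fun i : Fin k => r - i - (k:ℤ) * y i)
          = fun i : Fin k => r - i - (fun _ : Fin k => (0:ℤ)) i - k * y i := by
        funext i; ring
      rw [heq] at hne
      have hb := y_bounds hk s r _ y (fun i => by norm_num) hne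
      apply hmemB0
      intro l
      obtain ⟨h1, h2⟩ := hb l
      constructor <;> linarith
    have hsupp1 : ∀ y : Fin k → ℤ, (∑ i, y i = 0) →
        Dm k s (fun i => r - 1 - i - (k:ℤ) * y i) ≠ 0 → y ∈ B0 := by
      intro y hy hne
      have heq : (fun i : Fin k => r - 1 - i - (k:ℤ) * y i)
          = fun i : Fin k => (r - 1) - i - (fun _ : Fin k => (0:ℤ)) i - k * y i := by
        funext i; ring
      rw [heq] at hne
      have hb := y_bounds hk s (r - 1) _ y (fun i => by norm_num) hne
      have habs : |r - 1| ≤ |r| + 1 := by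
        calc |r - 1| ≤ |r| + |(1:ℤ)| := abs_sub r 1
          _ = |r| + 1 := by norm_num
      apply hmemB0
      intro l
      obtain ⟨h1, h2⟩ := hb l
      constructor <;> linarith
    rw [Multiset.map_cons, esymI_cons, ← ih r, ← ih (r-1)]
    rw [finsum_T_eq_sum _ B0 hsuppA]
    have expand : ∀ y : Fin k → ℤ,
        Dm k (a ::ₘ s) (fun i => r - i - (k:ℤ) * y i)
          = ∑ S ∈ (Finset.univ : Finset (Fin k)).powerset,
              a ^ S.card * Dm k s (fun i => r - i - (if i ∈ S then 1 else 0) - (k:ℤ) * y i) := by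
      intro y
      rw [Dm_cons]
      apply Finset.sum_congr rfl
      intro S _
      congr 2
      funext i
      ring
    rw [Finset.sum_congr rfl fun y _ => expand y]
    rw [Finset.sum_comm]
    have hpair_subset : ({∅, Finset.univ} : Finset (Finset (Fin k)))
        ⊆ (Finset.univ : Finset (Fin k)).powerset := by
      intro S hS
      simp only [Finset.mem_insert, Finset.mem_singleton] at hS
      rcases hS with h | h <;> subst h <;> simp
    rw [← Finset.sum_subset hpair_subset ?hzero]
    case hzero =>
      intro S _ hSne
      simp only [Finset.mem_insert, Finset.mem_singleton] at hSne
      push_neg at hSne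
      rw [← finsum_T_eq_sum
        (fun y => a ^ S.card * Dm k s fun i => r - i - (if i ∈ S then 1 else 0) - (k:ℤ) * y i)
        B0 (hsuppS S)]
      rcases boundary hk S hSne.1.ne_empty hSne.2 with ⟨i0, h1, hi0, hi1⟩ | ⟨hla, h0⟩
      · exact vanishA hk s r a S i0 h1 hi0 hi1
      · exact vanishB hk s r a S hla h0
    have hne_pair : (∅ : Finset (Fin k)) ≠ Finset.univ := by
      intro h
      have : (⟨0, hk⟩ : Fin k) ∈ (∅ : Finset (Fin k)) := h ▸ Finset.mem_univ _
      simp at this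
    rw [Finset.sum_pair hne_pair]
    congr 1
    · rw [finsum_T_eq_sum _ B0 hsupp0]
      apply Finset.sum_congr rfl
      intro y _
      simp only [Finset.card_empty, pow_zero, one_mul, Finset.notMem_empty, if_false]
      congr 1
      funext i
      ring
    · rw [finsum_T_eq_sum _ B0 hsupp1, Finset.mul_sum]
      apply Finset.sum_congr rfl
      intro y _
      simp only [Finset.card_univ, Fintype.card_fin, Finset.mem_univ, if_true]
      congr 2
      funext i
      ring

end AuxJT

/-- the `t = 1` specialisation of the affine dual Jacobi–Trudi formula:
`Σ_{y∈ℤ^k, |y|=0} det(e_{r−i+j−k·yᵢ}(x)) = e_r(x₁^k,…,xₙ^k)` in `ℤ[x₁,…,xₙ]`. -/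
theorem affine_dual_JT_t_eq_one (k n : ℕ) (hk : 0 < k) (hn : 0 < n) (r : ℕ) :
    ∑ᶠ y ∈ {y : Fin k → ℤ | ∑ i, y i = 0},
        Matrix.det (Matrix.of fun i j : Fin k =>
          eSym (fun l : Fin n => (MvPolynomial.X l : MvPolynomial (Fin n) ℤ))
            ((r : ℤ) - ((i : ℕ) : ℤ) + ((j : ℕ) : ℤ) - (k : ℤ) * y i)) =
      eSym (fun l : Fin n => (MvPolynomial.X l : MvPolynomial (Fin n) ℤ) ^ k) (r : ℤ) := by
  have h := main_ind (R := MvPolynomial (Fin n) ℤ) hk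
    (Finset.univ.val.map (fun l : Fin n => (MvPolynomial.X l : MvPolynomial (Fin n) ℤ)))
    (r : ℤ)
  have hL : ∀ y : Fin k → ℤ,
      Matrix.det (Matrix.of fun i j : Fin k =>
        eSym (fun l : Fin n => (MvPolynomial.X l : MvPolynomial (Fin n) ℤ))
          ((r : ℤ) - ((i : ℕ) : ℤ) + ((j : ℕ) : ℤ) - (k : ℤ) * y i))
      = Dm k (Finset.univ.val.map fun l : Fin n => (MvPolynomial.X l : MvPolynomial (Fin n) ℤ))
          (fun i => (r:ℤ) - i - k * y i) := by
    intro y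
    rw [Dm]
    congr 1
    ext i j
    simp only [Matrix.of_apply]
    rw [eSym]
    congr 1
    ring
  rw [finsum_mem_congr rfl (fun y _ => hL y), h]
  rw [eSym]
  congr 1
  rw [Multiset.map_map]
  rfl
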